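/- Secant lemma: Let κ be a conic, P a point on κ, and t the tangent to κ at P. If l is a line passing through P and l ≠ t, then l passes through a second point R of κ with R ≠ P; thus l is a secant of κ. -/
import Mathlib


open Configuration

universe u
variable (P L : Type u) [Membership P L]

/-- Three points are collinear if some line passes through all three. -/
def Col (A B C : P) : Prop := ∃ l : L, A ∈ l ∧ B ∈ l ∧ C ∈ l

/-- Every line of `L` is incident with at least `n` distinct points. -/
def LinesHaveAtLeast (n : ℕ) : Prop :=
  ∀ l : L, ∃ s : Finset P, n ≤ s.card ∧ ∀ X ∈ s, X ∈ l

/-- An object of the plane: the range of a line or the pencil of a point. -/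
inductive Obj (P L : Type u) where
  | range : L → Obj P L
  | pencil : P → Obj P L

/-- The carrier of an object: the points on the line, resp. the lines through
the point. -/
abbrev Obj.Carrier {P L : Type u} [Membership P L] : Obj P L → Type u
  | .range l => {X : P // X ∈ l}
  | .pencil U => {k : L // U ∈ k}

/-- `f` is the perspectivity from the range of `l` to the range of `m` with
center `O`, a point outside both `l` and `m` : each point `X` of `l` is mapped
to the point `(OX)·m`, i.e. `O`, `X` and `f X` are collinear. -/
def IsRangePersp (l m : L) (f : {X : P // X ∈ l} → {Y : P // Y ∈ m}) : Prop :=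
  ∃ O : P, O ∉ l ∧ O ∉ m ∧
    ∀ X : {X : P // X ∈ l}, ∃ k : L, O ∈ k ∧ (X : P) ∈ k ∧ ((f X : P)) ∈ k

/-- `f` is the elementary map from the pencil of `U` to the range of a line `l`
not through `U` : each line `k` through `U` is sent to the point `k·l`. -/
def IsElemMap (U : P) (l : L) (f : {k : L // U ∈ k} → {X : P // X ∈ l}) : Prop :=
  U ∉ l ∧ ∀ k : {k : L // U ∈ k}, ((f k : P)) ∈ (k : L)

/-- `f` is the elementary map from the range of a line `l` to the pencil of a
point `U` outside `l` : each point `X` of `l` is sent to the line `UX`. -/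
def IsElemInv (U : P) (l : L) (f : {X : P // X ∈ l} → {k : L // U ∈ k}) : Prop :=
  U ∉ l ∧ ∀ X : {X : P // X ∈ l}, (X : P) ∈ ((f X : L))

/-- A projectivity (between ranges or pencils) : a composite of finitely many
perspectivities and elementary maps. -/
inductive IsProj : (a b : Obj P L) → (a.Carrier → b.Carrier) → Prop where
  | persp {l m : L} {f : {X : P // X ∈ l} → {Y : P // Y ∈ m}} :
      IsRangePersp P L l m f → IsProj (.range l) (.range m) f
  | elem {U : P} {l : L} {f : {k : L // U ∈ k} → {X : P // X ∈ l}} :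
      IsElemMap P L U l f → IsProj (.pencil U) (.range l) f
  | elemInv {U : P} {l : L} {f : {X : P // X ∈ l} → {k : L // U ∈ k}} :
      IsElemInv P L U l f → IsProj (.range l) (.pencil U) f
  | comp {a b c : Obj P L} {f : a.Carrier → b.Carrier} {g : b.Carrier → c.Carrier} :
      IsProj a b f → IsProj b c g → IsProj a c (g ∘ f)

/-- Axiom T: every projectivity of a range or a pencil onto itself having three
distinct fixed elements is the identity. -/
def AxiomT : Prop :=
  ∀ (a : Obj P L) (f : a.Carrier → a.Carrier), IsProj P L a a f →
    (∃ x y z : a.Carrier, x ≠ y ∧ x ≠ z ∧ y ≠ z ∧ f x = x ∧ f y = y ∧ f z = z) →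
    ∀ w, f w = w

/-- The Steiner conic `κ(π;U,V)` defined by a projectivity `π : U* → V*` :
the locus of points `l·π(l)` for `l` a line through `U`. -/
def conicSet (U V : P) (π : {k : L // U ∈ k} → {k : L // V ∈ k}) : Set P :=
  {X : P | ∃ k : {k : L // U ∈ k}, X ∈ (k : L) ∧ X ∈ ((π k : L))}

/-- A conic: the Steiner conic of some nonperspective projectivity between the
pencils of two distinct points. -/
def IsConic (κ : Set P) : Prop :=
  ∃ (U V : P) (π : {k : L // U ∈ k} → {k : L // V ∈ k}),
    U ≠ V ∧ IsProj P L (.pencil U) (.pencil V) π ∧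
    (∀ k : {k : L // U ∈ k}, ((π k : L)) ≠ (k : L)) ∧
    κ = conicSet P L U V π

/-- A line `t` is tangent to `κ` at `Q` if `Q` is on `κ` and on `t`, and is the
only point of `κ` incident with `t`. -/
def IsTangent (κ : Set P) (t : L) (Q : P) : Prop :=
  Q ∈ κ ∧ Q ∈ t ∧ ∀ X ∈ κ, X ∈ t → X = Q

/-- A line is a secant of `κ` if it passes through two distinct points of `κ`. -/
def IsSecant (κ : Set P) (s : L) : Prop :=
  ∃ X Y : P, X ≠ Y ∧ X ∈ κ ∧ Y ∈ κ ∧ X ∈ s ∧ Y ∈ s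

/-- Axiom P: the tangents to a conic at any three distinct points of the conic
are nonconcurrent. -/
def AxiomP : Prop :=
  ∀ κ : Set P, IsConic P L κ →
    ∀ X Y Z : P, X ∈ κ → Y ∈ κ → Z ∈ κ → X ≠ Y → X ≠ Z → Y ≠ Z →
      ∀ tx ty tz : L, IsTangent P L κ tx X → IsTangent P L κ ty Y → IsTangent P L κ tz Z →
        ¬ ∃ W : P, W ∈ tx ∧ W ∈ ty ∧ W ∈ tz

set_option linter.unusedSectionVars false

section Basics

variable {P L}
variable [Configuration.ProjectivePlane P L]

/-- the join of two distinct points -/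
noncomputable def joinL {A B : P} (h : A ≠ B) : L := HasLines.mkLine (L := L) h

lemma joinL_left {A B : P} (h : A ≠ B) : A ∈ (joinL h : L) := (HasLines.mkLine_ax h).1
lemma joinL_right {A B : P} (h : A ≠ B) : B ∈ (joinL h : L) := (HasLines.mkLine_ax h).2

/-- the meet of two distinct lines -/
noncomputable def meetP {l m : L} (h : l ≠ m) : P := HasPoints.mkPoint (P := P) h

lemma meetP_left {l m : L} (h : l ≠ m) : (meetP h : P) ∈ l := (HasPoints.mkPoint_ax h).1
lemma meetP_right {l m : L} (h : l ≠ m) : (meetP h : P) ∈ m := (HasPoints.mkPoint_ax h).2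

lemma eq_pt_of_two_lines {l m : L} (h : l ≠ m) {X Y : P}
    (hXl : X ∈ l) (hXm : X ∈ m) (hYl : Y ∈ l) (hYm : Y ∈ m) : X = Y :=
  (Nondegenerate.eq_or_eq hXl hYl hXm hYm).resolve_right h

lemma eq_line_of_two_pts {A B : P} (h : A ≠ B) {l m : L}
    (hAl : A ∈ l) (hBl : B ∈ l) (hAm : A ∈ m) (hBm : B ∈ m) : l = m :=
  (Nondegenerate.eq_or_eq hAl hBl hAm hBm).resolve_left h

lemma joinL_eq {A B : P} (h : A ≠ B) {l : L} (hA : A ∈ l) (hB : B ∈ l) : joinL h = l :=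
  eq_line_of_two_pts h (joinL_left h) (joinL_right h) hA hB

lemma meetP_eq {l m : L} (h : l ≠ m) {X : P} (hX : X ∈ l) (hX' : X ∈ m) : meetP h = X :=
  eq_pt_of_two_lines h (meetP_left h) (meetP_right h) hX hX'

lemma ne_pt_of_mem_notMem {A B : P} {l : L} (hA : A ∈ l) (hB : B ∉ l) : A ≠ B :=
  fun h => hB (h ▸ hA)

lemma ne_line_of_mem_notMem {l m : L} {A : P} (hA : A ∈ l) (hA' : A ∉ m) : l ≠ m :=
  fun h => hA' (h ▸ hA)

/-- extra points on a line avoiding two given points -/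
lemma exists_mem_ne_ne (h6 : LinesHaveAtLeast P L 6) (l : L) (E F : P) :
    ∃ B, B ∈ l ∧ B ≠ E ∧ B ≠ F := by
  classical
  obtain ⟨s, hcard, hs⟩ := h6 l
  have h1 : s.card - 1 ≤ (s.erase E).card := Finset.pred_card_le_card_erase
  have h2 : (s.erase E).card - 1 ≤ ((s.erase E).erase F).card := Finset.pred_card_le_card_erase
  have : 0 < ((s.erase E).erase F).card := by omega
  obtain ⟨B, hB⟩ := Finset.card_pos.mp this
  have hB1 := Finset.mem_erase.mp hB
  have hB2 := Finset.mem_erase.mp hB1.2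
  exact ⟨B, hs B hB2.2, hB2.1, hB1.1⟩

lemma exists_two_mem_ne (h6 : LinesHaveAtLeast P L 6) (l : L) (E : P) :
    ∃ B C : P, B ∈ l ∧ C ∈ l ∧ B ≠ C ∧ B ≠ E ∧ C ≠ E := by
  obtain ⟨B, hBl, hBE, -⟩ := exists_mem_ne_ne h6 l E E
  obtain ⟨C, hCl, hCE, hCB⟩ := exists_mem_ne_ne h6 l E B
  exact ⟨B, C, hBl, hCl, hCB.symm, hBE, hCE⟩

lemma exists_pt_off_two (h6 : LinesHaveAtLeast P L 6) (l m : L) :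
    ∃ O : P, O ∉ l ∧ O ∉ m := by
  by_cases hlm : l = m
  · obtain ⟨p, hp⟩ := Nondegenerate.exists_point (P := P) l
    exact ⟨p, hp, fun h => hp (hlm ▸ h)⟩
  · set E : P := meetP hlm with hE
    obtain ⟨B, hBl, hBE, -⟩ := exists_mem_ne_ne h6 l E E
    obtain ⟨C, hCl, hCE, -⟩ := exists_mem_ne_ne h6 m E E
    have hBm : B ∉ m := fun h => hBE (eq_pt_of_two_lines hlm hBl h (meetP_left hlm) (meetP_right hlm))
    have hCl' : C ∉ l := fun h => hCE (eq_pt_of_two_lines hlm h hCl (meetP_left hlm) (meetP_right hlm))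
    have hBC : B ≠ C := fun h => hBm (h ▸ hCl)
    set w : L := joinL hBC with hw
    have hwl : w ≠ l := ne_line_of_mem_notMem (joinL_right hBC) hCl'
    have hwm : w ≠ m := ne_line_of_mem_notMem (joinL_left hBC) hBm
    obtain ⟨O, hOw, hOB, hOC⟩ := exists_mem_ne_ne h6 w B C
    refine ⟨O, fun h => hOB ?_, fun h => hOC ?_⟩
    · exact eq_pt_of_two_lines hwl hOw h (joinL_left hBC) hBl
    · exact eq_pt_of_two_lines hwm hOw h (joinL_right hBC) hCl

end Basics

section Maps

variable {P L : Type u} [Membership P L] [Configuration.ProjectivePlane P L]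

/-- canonical elementary map pencil → range -/
noncomputable def elemF (V : P) (g : L) (h : V ∉ g) :
    {k : L // V ∈ k} → {X : P // X ∈ g} :=
  fun n => ⟨meetP (ne_line_of_mem_notMem n.2 h), meetP_right _⟩

lemma elemF_spec (V : P) (g : L) (h : V ∉ g) : IsElemMap P L V g (elemF V g h) :=
  ⟨h, fun _ => meetP_left _⟩

lemma elemF_mem_line (V : P) (g : L) (h : V ∉ g) (n : {k : L // V ∈ k}) :
    ((elemF V g h n : P)) ∈ (n : L) := meetP_left _

/-- canonical elementary map range → pencil -/
noncomputable def elemInvF (U : P) (s : L) (h : U ∉ s) :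
    {X : P // X ∈ s} → {k : L // U ∈ k} :=
  fun X => ⟨joinL (fun he => h (he ▸ X.2) : U ≠ (X : P)), joinL_left _⟩

lemma elemInvF_spec (U : P) (s : L) (h : U ∉ s) : IsElemInv P L U s (elemInvF U s h) :=
  ⟨h, fun _ => joinL_right _⟩

lemma elemInvF_mem (U : P) (s : L) (h : U ∉ s) (X : {X : P // X ∈ s}) :
    (X : P) ∈ ((elemInvF U s h X : L)) := joinL_right _

/-- canonical perspectivity -/
noncomputable def perspF (O : P) (l m : L) (h1 : O ∉ l) (h2 : O ∉ m) :
    {X : P // X ∈ l} → {Y : P // Y ∈ m} :=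
  fun X =>
    ⟨meetP (ne_line_of_mem_notMem (joinL_left (fun he => h1 (he ▸ X.2) : O ≠ (X : P))) h2),
     meetP_right _⟩

lemma perspF_spec (O : P) (l m : L) (h1 : O ∉ l) (h2 : O ∉ m) :
    IsRangePersp P L l m (perspF O l m h1 h2) :=
  ⟨O, h1, h2, fun X => ⟨joinL _, joinL_left _, joinL_right _, meetP_left _⟩⟩

lemma perspF_collinear (O : P) (l m : L) (h1 : O ∉ l) (h2 : O ∉ m) (X : {X : P // X ∈ l})
    {k : L} (hO : O ∈ k) (hX : (X : P) ∈ k) : ((perspF O l m h1 h2 X : P)) ∈ k := by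
  have hOX : O ≠ (X : P) := fun he => h1 (he ▸ X.2)
  have : joinL hOX = k := eq_line_of_two_pts hOX (joinL_left _) (joinL_right _) hO hX
  exact this ▸ meetP_left _

lemma perspF_eq_of (O : P) (l m : L) (h1 : O ∉ l) (h2 : O ∉ m) (X : {X : P // X ∈ l})
    {Y : P} (hYm : Y ∈ m) {k : L} (hO : O ∈ k) (hX : (X : P) ∈ k) (hY : Y ∈ k) :
    perspF O l m h1 h2 X = ⟨Y, hYm⟩ := by
  have hkm : k ≠ m := ne_line_of_mem_notMem hO h2
  have h3 := perspF_collinear O l m h1 h2 X hO hX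
  exact Subtype.ext (eq_pt_of_two_lines hkm h3 (perspF O l m h1 h2 X).2 hY hYm)

lemma perspF_inv (O : P) (l m : L) (h1 : O ∉ l) (h2 : O ∉ m) (X : {X : P // X ∈ l}) :
    perspF O m l h2 h1 (perspF O l m h1 h2 X) = X := by
  set Y := perspF O l m h1 h2 X with hY
  have hOX : O ≠ (X : P) := fun he => h1 (he ▸ X.2)
  exact perspF_eq_of O m l h2 h1 Y X.2 (joinL_left hOX)
    (hY ▸ meetP_left _) (joinL_right hOX)

/-- every projectivity has an inverse projectivity -/
lemma IsProj.exists_inv {a b : Obj P L} {f : a.Carrier → b.Carrier}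
    (h : IsProj P L a b f) :
    ∃ g : b.Carrier → a.Carrier, IsProj P L b a g ∧ (∀ x, g (f x) = x) ∧ (∀ y, f (g y) = y) := by
  induction h with
  | @persp l m f hf =>
    obtain ⟨O, h1, h2, hs⟩ := hf
    have key : ∀ X, f X = perspF O l m h1 h2 X := by
      intro X
      obtain ⟨k, hOk, hXk, hfk⟩ := hs X
      exact (perspF_eq_of O l m h1 h2 X (f X).2 hOk hXk hfk).symm
    refine ⟨perspF O m l h2 h1, IsProj.persp (perspF_spec O m l h2 h1), ?_, ?_⟩
    · intro X; rw [key X, perspF_inv]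
    · intro Y; rw [key (perspF O m l h2 h1 Y), perspF_inv]
  | @elem U l f hf =>
    obtain ⟨hUl, hmem⟩ := hf
    refine ⟨elemInvF U l hUl, IsProj.elemInv (elemInvF_spec U l hUl), ?_, ?_⟩
    · intro k
      apply Subtype.ext
      have h1 : U ≠ ((f k : P)) := fun he => hUl (he ▸ (f k).2)
      exact eq_line_of_two_pts h1 (joinL_left h1) (joinL_right h1) k.2 (hmem k)
    · intro X
      apply Subtype.ext
      have hjl : (elemInvF U l hUl X : L) ≠ l := ne_line_of_mem_notMem (elemInvF U l hUl X).2 hUl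
      exact eq_pt_of_two_lines hjl (hmem _) (f _).2 (elemInvF_mem U l hUl X) X.2
  | @elemInv U l f hf =>
    obtain ⟨hUl, hmem⟩ := hf
    refine ⟨elemF U l hUl, IsProj.elem (elemF_spec U l hUl), ?_, ?_⟩
    · intro X
      apply Subtype.ext
      have hjl : (f X : L) ≠ l := ne_line_of_mem_notMem (f X).2 hUl
      exact eq_pt_of_two_lines hjl (elemF_mem_line U l hUl (f X)) (elemF U l hUl (f X)).2
        (hmem X) X.2
    · intro k
      apply Subtype.ext
      have hmp : U ≠ ((elemF U l hUl k : P)) := fun he => hUl (he ▸ (elemF U l hUl k).2)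
      exact eq_line_of_two_pts hmp (f _).2 (hmem (elemF U l hUl k)) k.2
        (elemF_mem_line U l hUl k)
  | comp h1 h2 ih1 ih2 =>
    obtain ⟨g1, hg1, hgf1, hfg1⟩ := ih1
    obtain ⟨g2, hg2, hgf2, hfg2⟩ := ih2
    refine ⟨g1 ∘ g2, IsProj.comp hg2 hg1, ?_, ?_⟩
    · intro x; simp only [Function.comp_apply]; rw [hgf2, hgf1]
    · intro y; simp only [Function.comp_apply]; rw [hfg1, hfg2]

end Maps

section FT

variable {P L : Type u} [Membership P L] [Configuration.ProjectivePlane P L]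

lemma IsProj.injective {a b : Obj P L} {f : a.Carrier → b.Carrier}
    (h : IsProj P L a b f) : Function.Injective f := by
  obtain ⟨g, -, hgf, -⟩ := h.exists_inv
  intro x y hxy
  rw [← hgf x, ← hgf y, hxy]

/-- the fundamental theorem (uniqueness form): two projectivities agreeing
at three distinct elements agree everywhere. -/
lemma proj_eq_of_agree3 (hT : AxiomT P L) {a b : Obj P L}
    {f g : a.Carrier → b.Carrier} (hf : IsProj P L a b f) (hg : IsProj P L a b g)
    {x y z : a.Carrier} (hxy : x ≠ y) (hxz : x ≠ z) (hyz : y ≠ z)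
    (e1 : f x = g x) (e2 : f y = g y) (e3 : f z = g z) : ∀ w, f w = g w := by
  obtain ⟨g', hg', hgf', hfg'⟩ := hg.exists_inv
  have hc : IsProj P L a a (g' ∘ f) := IsProj.comp hf hg'
  have hfix : ∀ w, (g' ∘ f) w = w := by
    refine hT a (g' ∘ f) hc ⟨x, y, z, hxy, hxz, hyz, ?_, ?_, ?_⟩
    · show g' (f x) = x; rw [e1, hgf']
    · show g' (f y) = y; rw [e2, hgf']
    · show g' (f z) = z; rw [e3, hgf']
  intro w
  have := hfix w
  simp only [Function.comp_apply] at this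
  calc f w = g (g' (f w)) := (hfg' (f w)).symm
    _ = g w := by rw [this]

/-- a projectivity between distinct lines fixing their common point is a
perspectivity. -/
lemma persp_of_fixes_common (hT : AxiomT P L) (h6 : LinesHaveAtLeast P L 6)
    {s t : L} (hst : s ≠ t) {E : P} (hEs : E ∈ s) (hEt : E ∈ t)
    {g : {X : P // X ∈ s} → {X : P // X ∈ t}} (hg : IsProj P L (.range s) (.range t) g)
    (hfix : g ⟨E, hEs⟩ = ⟨E, hEt⟩) :
    ∃ (O : P) (hOs : O ∉ s) (hOt : O ∉ t), ∀ X, g X = perspF O s t hOs hOt X := by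
  obtain ⟨B, C, hBs, hCs, hBC, hBE, hCE⟩ := exists_two_mem_ne h6 s E
  have hBt : B ∉ t := fun h => hBE (eq_pt_of_two_lines hst hBs h hEs hEt)
  have hCt : C ∉ t := fun h => hCE (eq_pt_of_two_lines hst hCs h hEs hEt)
  set gB := g ⟨B, hBs⟩ with hgB
  set gC := g ⟨C, hCs⟩ with hgC
  have hginj := hg.injective
  have hgBE : (gB : P) ≠ E := by
    intro h
    have : g ⟨B, hBs⟩ = g ⟨E, hEs⟩ := by rw [hfix, ← hgB]; exact Subtype.ext h
    exact hBE (congrArg Subtype.val (hginj this))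
  have hgCE : (gC : P) ≠ E := by
    intro h
    have : g ⟨C, hCs⟩ = g ⟨E, hEs⟩ := by rw [hfix, ← hgC]; exact Subtype.ext h
    exact hCE (congrArg Subtype.val (hginj this))
  have hgBs : (gB : P) ∉ s := fun h => hgBE (eq_pt_of_two_lines hst h gB.2 hEs hEt)
  have hgCs : (gC : P) ∉ s := fun h => hgCE (eq_pt_of_two_lines hst h gC.2 hEs hEt)
  have hBgB : B ≠ (gB : P) := fun h => hgBs (h ▸ hBs)
  have hCgC : C ≠ (gC : P) := fun h => hgCs (h ▸ hCs)
  set bB : L := joinL hBgB with hbB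
  set bC : L := joinL hCgC with hbC
  have hbBs : bB ≠ s := ne_line_of_mem_notMem (joinL_right hBgB) hgBs
  have hbCs : bC ≠ s := ne_line_of_mem_notMem (joinL_right hCgC) hgCs
  have hbBt : bB ≠ t := ne_line_of_mem_notMem (joinL_left hBgB) hBt
  have hbCt : bC ≠ t := ne_line_of_mem_notMem (joinL_left hCgC) hCt
  have hbBC : bB ≠ bC := by
    intro h
    have hCbB : C ∈ bB := h ▸ joinL_left hCgC
    have : bB = s := eq_line_of_two_pts hBC (joinL_left hBgB) hCbB hBs hCs
    exact hbBs this
  set O : P := meetP hbBC with hO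
  have hOs : O ∉ s := by
    intro h
    have h1 : O = B := eq_pt_of_two_lines hbBs (meetP_left hbBC) h (joinL_left hBgB) hBs
    have h2 : O = C := eq_pt_of_two_lines hbCs (meetP_right hbBC) h (joinL_left hCgC) hCs
    exact hBC (h1 ▸ h2)
  have hOt : O ∉ t := by
    intro h
    have h1 : O = (gB : P) := eq_pt_of_two_lines hbBt (meetP_left hbBC) h (joinL_right hBgB) gB.2
    have h2 : O = (gC : P) := eq_pt_of_two_lines hbCt (meetP_right hbBC) h (joinL_right hCgC) gC.2
    have : gB = gC := Subtype.ext (h1 ▸ h2)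
    exact hBC (congrArg Subtype.val (hginj (hgB ▸ hgC ▸ this)))
  refine ⟨O, hOs, hOt, ?_⟩
  have hp : IsProj P L (.range s) (.range t) (perspF O s t hOs hOt) :=
    IsProj.persp (perspF_spec O s t hOs hOt)
  have hOE : O ≠ E := fun h => hOs (h ▸ hEs)
  have e1 : g ⟨E, hEs⟩ = perspF O s t hOs hOt ⟨E, hEs⟩ := by
    rw [hfix]
    exact (perspF_eq_of O s t hOs hOt ⟨E, hEs⟩ hEt (joinL_left hOE) (joinL_right hOE)
      (joinL_right hOE)).symm
  have e2 : g ⟨B, hBs⟩ = perspF O s t hOs hOt ⟨B, hBs⟩ := by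
    rw [← hgB]
    exact (perspF_eq_of O s t hOs hOt ⟨B, hBs⟩ gB.2 (meetP_left hbBC) (joinL_left hBgB)
      (joinL_right hBgB)).symm
  have e3 : g ⟨C, hCs⟩ = perspF O s t hOs hOt ⟨C, hCs⟩ := by
    rw [← hgC]
    exact (perspF_eq_of O s t hOs hOt ⟨C, hCs⟩ gC.2 (meetP_right hbBC) (joinL_left hCgC)
      (joinL_right hCgC)).symm
  have hEB : (⟨E, hEs⟩ : {X : P // X ∈ s}) ≠ ⟨B, hBs⟩ := fun h => hBE (congrArg Subtype.val h).symm
  have hEC : (⟨E, hEs⟩ : {X : P // X ∈ s}) ≠ ⟨C, hCs⟩ := fun h => hCE (congrArg Subtype.val h).symm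
  have hBC' : (⟨B, hBs⟩ : {X : P // X ∈ s}) ≠ ⟨C, hCs⟩ := fun h => hBC (congrArg Subtype.val h)
  exact proj_eq_of_agree3 hT hg hp hEB hEC hBC' e1 e2 e3

end FT

section Parabolic

variable {P L : Type u} [Membership P L] [Configuration.ProjectivePlane P L]

/-- Two parabolic projectivities of a line with the same unique fixed point,
agreeing at one further point, agree everywhere. -/
lemma parabolic_unique (hT : AxiomT P L) (h6 : LinesHaveAtLeast P L 6)
    {t : L} {f₁ f₂ : {X : P // X ∈ t} → {X : P // X ∈ t}}
    (h1 : IsProj P L (.range t) (.range t) f₁)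
    (h2 : IsProj P L (.range t) (.range t) f₂)
    (a : {X : P // X ∈ t})
    (hf1a : f₁ a = a) (hf2a : f₂ a = a)
    (hp1 : ∀ x, f₁ x = x → x = a) (hp2 : ∀ x, f₂ x = x → x = a)
    {x₁ : {X : P // X ∈ t}} (hx₁ : x₁ ≠ a) (hagree : f₁ x₁ = f₂ x₁) :
    ∀ x, f₁ x = f₂ x := by
  -- auxiliary line s through a, distinct from t
  obtain ⟨Z, hZt⟩ := Nondegenerate.exists_point (P := P) t
  have haZ : (a : P) ≠ Z := ne_pt_of_mem_notMem a.2 hZt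
  set s : L := joinL haZ with hs
  have has : (a : P) ∈ s := joinL_left haZ
  have hst : s ≠ t := ne_line_of_mem_notMem (joinL_right haZ) hZt
  -- center O off both lines
  obtain ⟨O, hOt, hOs⟩ := exists_pt_off_two h6 t s
  set q := perspF O t s hOt hOs with hq
  set qi := perspF O s t hOs hOt with hqi
  have hqq : ∀ X, qi (q X) = X := fun X => perspF_inv O t s hOt hOs X
  have hqq' : ∀ Y, q (qi Y) = Y := fun Y => perspF_inv O s t hOs hOt Y
  have hqa : qi ⟨(a : P), has⟩ = a := by
    have hOa : O ≠ (a : P) := fun h => hOs (h ▸ has)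
    exact perspF_eq_of O s t hOs hOt ⟨(a : P), has⟩ a.2 (joinL_left hOa) (joinL_right hOa)
      (joinL_right hOa)
  -- write fᵢ = perspᵢ ∘ q
  have key : ∀ (f : {X : P // X ∈ t} → {X : P // X ∈ t}),
      IsProj P L (.range t) (.range t) f → f a = a → (∀ x, f x = x → x = a) →
      ∃ (Of : P) (hOfs : Of ∉ s) (hOft : Of ∉ t),
        Of ∈ (joinL (fun h => hOt (h ▸ a.2) : O ≠ (a : P)) : L) ∧
        (∀ X, f X = perspF Of s t hOfs hOft (q X)) := by
    intro f hf hfa hpf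
    have hg : IsProj P L (.range s) (.range t) (f ∘ qi) :=
      IsProj.comp (IsProj.persp (perspF_spec O s t hOs hOt)) hf
    have hgfix : (f ∘ qi) ⟨(a : P), has⟩ = ⟨(a : P), a.2⟩ := by
      simp only [Function.comp_apply, hqa]
      exact hfa
    obtain ⟨Of, hOfs, hOft, hOf⟩ := persp_of_fixes_common hT h6 hst has a.2 hg hgfix
    have hfeq : ∀ X, f X = perspF Of s t hOfs hOft (q X) := by
      intro X
      have := hOf (q X)
      simp only [Function.comp_apply, hqq] at this
      exact this
    have hOOf : O ≠ Of := by
      intro h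
      subst h
      obtain ⟨B, hBt, hBa, -⟩ := exists_mem_ne_ne h6 t (a : P) (a : P)
      have : f ⟨B, hBt⟩ = ⟨B, hBt⟩ := by
        rw [hfeq]; exact perspF_inv O t s hOt hOs ⟨B, hBt⟩
      exact hBa (congrArg Subtype.val (hpf _ this))
    set ℓ : L := joinL hOOf with hℓ
    have hℓt : ℓ ≠ t := ne_line_of_mem_notMem (joinL_left hOOf) hOt
    set Bf : P := meetP hℓt with hBf
    have hBft : Bf ∈ t := meetP_right hℓt
    have hOBf : O ≠ Bf := fun h => hOt (h ▸ hBft)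
    have hqBf : (q ⟨Bf, hBft⟩ : P) ∈ ℓ ∧ (q ⟨Bf, hBft⟩ : P) ∈ s := by
      constructor
      · exact perspF_collinear O t s hOt hOs ⟨Bf, hBft⟩ (joinL_left hOOf) (meetP_left hℓt)
      · exact (q ⟨Bf, hBft⟩).2
    have hfix : f ⟨Bf, hBft⟩ = ⟨Bf, hBft⟩ := by
      rw [hfeq]
      refine perspF_eq_of Of s t hOfs hOft (q ⟨Bf, hBft⟩) hBft (k := ℓ) ?_ ?_ ?_
      · exact joinL_right hOOf
      · exact hqBf.1
      · exact meetP_left hℓt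
    have hBfa : Bf = (a : P) := congrArg Subtype.val (hpf _ hfix)
    have haℓ : (a : P) ∈ ℓ := hBfa ▸ meetP_left hℓt
    refine ⟨Of, hOfs, hOft, ?_, hfeq⟩
    have hOa' : O ≠ (a : P) := fun h => hOt (h ▸ a.2)
    have hle : ℓ = joinL hOa' :=
      eq_line_of_two_pts hOa' (joinL_left hOOf) haℓ (joinL_left hOa') (joinL_right hOa')
    exact hle ▸ joinL_right hOOf
  -- apply to f₁ and f₂
  have hOa' : O ≠ (a : P) := fun h => hOt (h ▸ a.2)
  obtain ⟨O₁, hO₁s, hO₁t, hO₁ℓ, hfeq1⟩ := key f₁ h1 hf1a hp1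
  obtain ⟨O₂, hO₂s, hO₂t, hO₂ℓ, hfeq2⟩ := key f₂ h2 hf2a hp2
  set y := f₁ x₁ with hy
  have hya : (y : P) ≠ (a : P) := by
    intro h
    have : f₁ x₁ = f₁ a := by rw [hf1a, ← hy]; exact Subtype.ext h
    exact hx₁ (h1.injective this)
  set Sx := q x₁ with hSx
  have hySx : (y : P) ≠ (Sx : P) := by
    intro h
    have hys : (y : P) ∈ s := h ▸ Sx.2
    exact hya (eq_pt_of_two_lines hst hys y.2 has a.2)
  set d : L := joinL hySx with hd
  have hO₁d : O₁ ∈ d := by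
    have hO₁Sx : O₁ ≠ (Sx : P) := fun h => hO₁s (h ▸ Sx.2)
    have hyj : (y : P) ∈ (joinL hO₁Sx : L) := by
      have := perspF_collinear O₁ s t hO₁s hO₁t Sx (joinL_left hO₁Sx) (joinL_right hO₁Sx)
      rw [← hfeq1 x₁] at this
      exact this
    have : joinL hO₁Sx = d :=
      eq_line_of_two_pts hySx hyj (joinL_right hO₁Sx) (joinL_left hySx) (joinL_right hySx)
    exact this ▸ joinL_left hO₁Sx
  have hO₂d : O₂ ∈ d := by
    have hO₂Sx : O₂ ≠ (Sx : P) := fun h => hO₂s (h ▸ Sx.2)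
    have hyj : (y : P) ∈ (joinL hO₂Sx : L) := by
      have := perspF_collinear O₂ s t hO₂s hO₂t Sx (joinL_left hO₂Sx) (joinL_right hO₂Sx)
      rw [← hfeq2 x₁, ← hagree] at this
      exact this
    have : joinL hO₂Sx = d :=
      eq_line_of_two_pts hySx hyj (joinL_right hO₂Sx) (joinL_left hySx) (joinL_right hySx)
    exact this ▸ joinL_left hO₂Sx
  have hdℓ : d ≠ (joinL hOa' : L) := by
    intro h
    have hyℓ : (y : P) ∈ (joinL hOa' : L) := h ▸ joinL_left hySx
    have hℓt : (joinL hOa' : L) ≠ t := ne_line_of_mem_notMem (joinL_left hOa') hOt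
    exact hya (eq_pt_of_two_lines hℓt hyℓ y.2 (joinL_right hOa') a.2)
  have hOO : O₁ = O₂ := eq_pt_of_two_lines hdℓ hO₁d hO₁ℓ hO₂d hO₂ℓ
  subst hOO
  intro x
  rw [hfeq1 x, hfeq2 x]

end Parabolic

section Chi

variable {P L : Type u} [Membership P L] [Configuration.ProjectivePlane P L]

variable {U V : P} (π : {k : L // U ∈ k} → {k : L // V ∈ k})

/-- the composite map  X ↦ π(UX)·g  from the range of s to the range of g -/
noncomputable def chiMap {s g : L} (hUs : U ∉ s) (hVg : V ∉ g) :
    {X : P // X ∈ s} → {X : P // X ∈ g} :=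
  elemF V g hVg ∘ (π ∘ elemInvF U s hUs)

lemma chiMap_isProj (hπ : IsProj P L (.pencil U) (.pencil V) π) {s g : L}
    (hUs : U ∉ s) (hVg : V ∉ g) :
    IsProj P L (.range s) (.range g) (chiMap π hUs hVg) :=
  IsProj.comp (IsProj.comp (IsProj.elemInv (elemInvF_spec U s hUs)) hπ)
    (IsProj.elem (elemF_spec V g hVg))

lemma chiMap_apply {s g : L} (hUs : U ∉ s) (hVg : V ∉ g) (X : {X : P // X ∈ s}) :
    chiMap π hUs hVg X = elemF V g hVg (π (elemInvF U s hUs X)) := rfl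

/-- value of the chi map via a known line through U and the image point -/
lemma chiMap_eq_of {s g : L} (hUs : U ∉ s) (hVg : V ∉ g) (X : {X : P // X ∈ s})
    {k : {k : L // U ∈ k}} (hXk : (X : P) ∈ (k : L))
    {Y : P} (hYg : Y ∈ g) (hYπ : Y ∈ ((π k : L))) :
    chiMap π hUs hVg X = ⟨Y, hYg⟩ := by
  have hUX : U ≠ (X : P) := fun he => hUs (he ▸ X.2)
  have hek : elemInvF U s hUs X = k := by
    apply Subtype.ext
    exact eq_line_of_two_pts hUX (joinL_left hUX) (joinL_right hUX) k.2 hXk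
  rw [chiMap_apply, hek]
  apply Subtype.ext
  have hπg : ((π k : L)) ≠ g := ne_line_of_mem_notMem (π k).2 hVg
  exact eq_pt_of_two_lines hπg (elemF_mem_line V g hVg (π k)) (elemF V g hVg (π k)).2 hYπ hYg

/-- points of the conic on s∩g are fixed-ish: chi sends them to themselves -/
lemma chiMap_fix_of_mem {s g : L} (hUs : U ∉ s) (hVg : V ∉ g) {X : P} (hXs : X ∈ s)
    (hXκ : X ∈ conicSet P L U V π) (hXg : X ∈ g) :
    chiMap π hUs hVg ⟨X, hXs⟩ = ⟨X, hXg⟩ := by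
  obtain ⟨k, hk1, hk2⟩ := hXκ
  exact chiMap_eq_of π hUs hVg ⟨X, hXs⟩ hk1 hXg hk2

lemma chiMap_mem_of_fix {s g : L} (hUs : U ∉ s) (hVg : V ∉ g) (X : {X : P // X ∈ s})
    (h : ((chiMap π hUs hVg X : P)) = (X : P)) : (X : P) ∈ conicSet P L U V π := by
  refine ⟨elemInvF U s hUs X, elemInvF_mem U s hUs X, ?_⟩
  have := elemF_mem_line V g hVg (π (elemInvF U s hUs X))
  rw [show elemF V g hVg (π (elemInvF U s hUs X)) = chiMap π hUs hVg X from rfl] at this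
  rw [h] at this
  exact this

end Chi

section Core

variable {P L : Type u} [Membership P L] [Configuration.ProjectivePlane P L]

lemma secant_core (h6 : LinesHaveAtLeast P L 6) (hT : AxiomT P L)
    {U V : P} {π : {k : L // U ∈ k} → {k : L // V ∈ k}}
    (hUV : U ≠ V) (hπ : IsProj P L (.pencil U) (.pencil V) π)
    (hnp : ∀ k : {k : L // U ∈ k}, ((π k : L)) ≠ (k : L))
    (Pt : P) (hPκ : Pt ∈ conicSet P L U V π) (t : L)
    (ht2 : Pt ∈ t) (ht3 : ∀ X ∈ conicSet P L U V π, X ∈ t → X = Pt)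
    (l : L) (hPl : Pt ∈ l) (hlt : l ≠ t) :
    ∃ R : P, R ∈ conicSet P L U V π ∧ R ≠ Pt ∧ R ∈ l := by
  by_contra hcon
  push_neg at hcon
  have hl3 : ∀ X ∈ conicSet P L U V π, X ∈ l → X = Pt := by
    intro X hX hXl
    by_contra hne
    exact hcon X hX hne hXl
  obtain ⟨ρ, hρ, hρπ, hπρ⟩ := hπ.exists_inv
  have πinj : Function.Injective π := hπ.injective
  have hUu : U ∈ (joinL hUV : L) := joinL_left hUV
  have hVu : V ∈ (joinL hUV : L) := joinL_right hUV
  set u : L := joinL hUV with hu_def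
  by_cases hPU : Pt = U
  · -- case Pt = U
    have hUl : U ∈ l := hPU ▸ hPl
    have hUt : U ∈ t := hPU ▸ ht2
    have keyl : ∀ (g : L) (hUg : U ∈ g), Pt ∈ g →
        (∀ X ∈ conicSet P L U V π, X ∈ g → X = Pt) → (π ⟨g, hUg⟩ : L) = u := by
      intro g hUg hPtg h3
      have hgπ : (π ⟨g, hUg⟩ : L) ≠ g := hnp ⟨g, hUg⟩
      have hPg : meetP hgπ ∈ conicSet P L U V π :=
        ⟨⟨g, hUg⟩, meetP_right hgπ, meetP_left hgπ⟩
      have hPgPt : meetP hgπ = Pt := h3 _ hPg (meetP_right hgπ)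
      have h5 : Pt ∈ (π ⟨g, hUg⟩ : L) := by
        rw [← hPgPt]; exact meetP_left hgπ
      have hUπ : U ∈ (π ⟨g, hUg⟩ : L) := hPU ▸ h5
      exact eq_line_of_two_pts hUV hUπ (π ⟨g, hUg⟩).2 hUu hVu
    have h1 : (π ⟨l, hUl⟩ : L) = u := keyl l hUl hPl hl3
    have h2 : (π ⟨t, hUt⟩ : L) = u := keyl t hUt ht2 ht3
    have : π ⟨l, hUl⟩ = π ⟨t, hUt⟩ := Subtype.ext (h1.trans h2.symm)
    have := πinj this
    exact hlt (congrArg Subtype.val this)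
  by_cases hPV : Pt = V
  · -- case Pt = V
    have hVl : V ∈ l := hPV ▸ hPl
    have hVt : V ∈ t := hPV ▸ ht2
    have keyl : ∀ (g : L) (hVg : V ∈ g), Pt ∈ g →
        (∀ X ∈ conicSet P L U V π, X ∈ g → X = Pt) → (ρ ⟨g, hVg⟩ : L) = u := by
      intro g hVg hPtg h3
      set k' := ρ ⟨g, hVg⟩ with hk'
      have hπk' : π k' = ⟨g, hVg⟩ := hπρ _
      have hgk' : g ≠ (k' : L) := by
        have := hnp k'
        rw [hπk'] at this
        exact this
      have hPg : meetP hgk' ∈ conicSet P L U V π := by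
        refine ⟨k', meetP_right hgk', ?_⟩
        rw [hπk']
        exact meetP_left hgk'
      have hPgPt : meetP hgk' = Pt := h3 _ hPg (meetP_left hgk')
      have h5 : Pt ∈ (k' : L) := by
        rw [← hPgPt]; exact meetP_right hgk'
      have hVk' : V ∈ (k' : L) := hPV ▸ h5
      exact eq_line_of_two_pts hUV k'.2 hVk' hUu hVu
    have h1 : (ρ ⟨l, hVl⟩ : L) = u := keyl l hVl hPl hl3
    have h2 : (ρ ⟨t, hVt⟩ : L) = u := keyl t hVt ht2 ht3
    have h3 : ρ ⟨l, hVl⟩ = ρ ⟨t, hVt⟩ := Subtype.ext (h1.trans h2.symm)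
    have h4 : π (ρ ⟨l, hVl⟩) = π (ρ ⟨t, hVt⟩) := congrArg π h3
    rw [hπρ, hπρ] at h4
    exact hlt (congrArg Subtype.val h4)
  -- main case : Pt ∉ {U, V}
  have hUPt : U ≠ Pt := fun h => hPU h.symm
  have hVPt : V ≠ Pt := fun h => hPV h.symm
  set k₀ : L := joinL hUPt with hk₀def
  set m₀ : L := joinL hVPt with hm₀def
  have hUk₀ : U ∈ k₀ := joinL_left hUPt
  have hPtk₀ : Pt ∈ k₀ := joinL_right hUPt
  have hVm₀ : V ∈ m₀ := joinL_left hVPt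
  have hPtm₀ : Pt ∈ m₀ := joinL_right hVPt
  have hπk₀ : π ⟨k₀, hUk₀⟩ = ⟨m₀, hVm₀⟩ := by
    obtain ⟨k, hk1, hk2⟩ := hPκ
    have hkk₀ : k = ⟨k₀, hUk₀⟩ :=
      Subtype.ext (eq_line_of_two_pts hUPt k.2 hk1 hUk₀ hPtk₀)
    rw [← hkk₀]
    exact Subtype.ext (eq_line_of_two_pts hVPt (π k).2 hk2 hVm₀ hPtm₀)
  set tU := ρ ⟨u, hVu⟩ with htUdef
  have hπtU : π tU = ⟨u, hVu⟩ := hπρ _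
  have hUκ : U ∈ conicSet P L U V π := ⟨tU, tU.2, by rw [hπtU]; exact hUu⟩
  have hVκ : V ∈ conicSet P L U V π := ⟨⟨u, hUu⟩, hVu, (π ⟨u, hUu⟩).2⟩
  have hUt : U ∉ t := fun h => hPU ((ht3 U hUκ h).symm)
  have hVt : V ∉ t := fun h => hPV ((ht3 V hVκ h).symm)
  have hUl : U ∉ l := fun h => hPU ((hl3 U hUκ h).symm)
  have hVl : V ∉ l := fun h => hPV ((hl3 V hVκ h).symm)
  have hPtu : Pt ∉ u := by
    intro h
    have hk₀u : k₀ = u := eq_line_of_two_pts hUPt hUk₀ hPtk₀ hUu h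
    have hm₀u : m₀ = u := eq_line_of_two_pts hVPt hVm₀ hPtm₀ hVu h
    have h1 : (⟨k₀, hUk₀⟩ : {k : L // U ∈ k}) = ⟨u, hUu⟩ := Subtype.ext hk₀u
    have h2 := hnp ⟨u, hUu⟩
    rw [← h1, hπk₀] at h2
    exact h2 (hm₀u.trans hk₀u.symm)
  have hPt_tU : Pt ∉ (tU : L) := by
    intro h
    have htUk₀ : (tU : L) = k₀ := eq_line_of_two_pts hUPt tU.2 h hUk₀ hPtk₀
    have h1 : tU = ⟨k₀, hUk₀⟩ := Subtype.ext htUk₀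
    rw [h1, hπk₀] at hπtU
    have : m₀ = u := congrArg Subtype.val hπtU
    exact hPtu (this ▸ hPtm₀)
  have htUt : (tU : L) ≠ t := ne_line_of_mem_notMem tU.2 hUt
  set X₁ : P := meetP htUt with hX₁def
  have hX₁tU : X₁ ∈ (tU : L) := meetP_left htUt
  have hX₁t : X₁ ∈ t := meetP_right htUt
  have hX₁Pt : X₁ ≠ Pt := fun h => hPt_tU (h ▸ hX₁tU)
  have hut : u ≠ t := ne_line_of_mem_notMem hVu hVt
  have hul : u ≠ l := ne_line_of_mem_notMem hVu hVl
  -- the three chi maps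
  set χt := chiMap π hUt hVt with hχt_def
  set χl := chiMap π hUl hVl with hχl_def
  set ω := chiMap π hUt hVl with hω_def
  have hχtP : IsProj P L (.range t) (.range t) χt := chiMap_isProj π hπ hUt hVt
  have hχlP : IsProj P L (.range l) (.range l) χl := chiMap_isProj π hπ hUl hVl
  have hωP : IsProj P L (.range t) (.range l) ω := chiMap_isProj π hπ hUt hVl
  obtain ⟨ωi, hωiP, hωi1, hωi2⟩ := hωP.exists_inv
  set Λ := ωi ∘ (χl ∘ ω) with hΛdef
  have hΛP : IsProj P L (.range t) (.range t) Λ := IsProj.comp (IsProj.comp hωP hχlP) hωiP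
  set a_t : {X : P // X ∈ t} := ⟨Pt, ht2⟩ with hat_def
  set a_l : {X : P // X ∈ l} := ⟨Pt, hPl⟩ with hal_def
  have hχta : χt a_t = a_t := chiMap_fix_of_mem π hUt hVt ht2 hPκ ht2
  have hχla : χl a_l = a_l := chiMap_fix_of_mem π hUl hVl hPl hPκ hPl
  have hωa : ω a_t = a_l := chiMap_fix_of_mem π hUt hVl ht2 hPκ hPl
  have hΛa : Λ a_t = a_t := by
    show ωi (χl (ω a_t)) = a_t
    rw [hωa, hχla, ← hωa, hωi1]
  have hχtp : ∀ x, χt x = x → x = a_t := by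
    intro x hx
    have h1 : ((χt x : P)) = (x : P) := congrArg Subtype.val hx
    have h2 : (x : P) ∈ conicSet P L U V π := chiMap_mem_of_fix π hUt hVt x h1
    exact Subtype.ext (ht3 _ h2 x.2)
  have hΛp : ∀ x, Λ x = x → x = a_t := by
    intro x hx
    have h1 : χl (ω x) = ω x := by
      calc χl (ω x) = ω (ωi (χl (ω x))) := (hωi2 _).symm
        _ = ω (Λ x) := rfl
        _ = ω x := congrArg ω hx
    have h2 : ((ω x : P)) ∈ conicSet P L U V π :=
      chiMap_mem_of_fix π hUl hVl (ω x) (congrArg Subtype.val h1)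
    have h3 : ω x = a_l := Subtype.ext (hl3 _ h2 (ω x).2)
    calc x = ωi (ω x) := (hωi1 x).symm
      _ = ωi (ω a_t) := by rw [h3, hωa]
      _ = a_t := hωi1 a_t
  -- agreement at x₁
  set x₁s : {X : P // X ∈ t} := ⟨X₁, hX₁t⟩ with hx₁def
  have hx₁a : x₁s ≠ a_t := fun h => hX₁Pt (congrArg Subtype.val h)
  set Y₁ : P := meetP hut with hY₁def
  set Y₁' : P := meetP hul with hY₁'def
  set tV := π ⟨u, hUu⟩ with htVdef
  have htVl : (tV : L) ≠ l := ne_line_of_mem_notMem tV.2 hVl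
  set Zp : P := meetP htVl with hZpdef
  have hχtx₁ : χt x₁s = ⟨Y₁, meetP_right hut⟩ := by
    refine chiMap_eq_of π hUt hVt x₁s (k := tU) hX₁tU (meetP_right hut) ?_
    rw [hπtU]; exact meetP_left hut
  have hωx₁ : ω x₁s = ⟨Y₁', meetP_right hul⟩ := by
    refine chiMap_eq_of π hUt hVl x₁s (k := tU) hX₁tU (meetP_right hul) ?_
    rw [hπtU]; exact meetP_left hul
  have hχlY₁' : χl ⟨Y₁', meetP_right hul⟩ = ⟨Zp, meetP_right htVl⟩ := by
    refine chiMap_eq_of π hUl hVl _ (k := ⟨u, hUu⟩) (meetP_left hul) (meetP_right htVl) ?_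
    exact meetP_left htVl
  have hωY₁ : ω ⟨Y₁, meetP_right hut⟩ = ⟨Zp, meetP_right htVl⟩ := by
    refine chiMap_eq_of π hUt hVl _ (k := ⟨u, hUu⟩) (meetP_left hut) (meetP_right htVl) ?_
    exact meetP_left htVl
  have hagree : Λ x₁s = χt x₁s := by
    show ωi (χl (ω x₁s)) = χt x₁s
    rw [hωx₁, hχlY₁', ← hωY₁, hωi1, hχtx₁]
  -- all equal ⟹ contradiction
  have hall : ∀ x, Λ x = χt x :=
    parabolic_unique hT h6 hΛP hχtP a_t hΛa hχta hΛp hχtp hx₁a hagree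
  have hk₀t : k₀ ≠ t := ne_line_of_mem_notMem hUk₀ hUt
  set W₀ : P := meetP hk₀t with hW₀def
  obtain ⟨B, hBt, hBX₁, hBW₀⟩ := exists_mem_ne_ne h6 t X₁ W₀
  set xB : {X : P // X ∈ t} := ⟨B, hBt⟩ with hxBdef
  have hreq : χl (ω xB) = ω (χt xB) := by
    have := congrArg ω (hall xB)
    calc χl (ω xB) = ω (ωi (χl (ω xB))) := (hωi2 _).symm
      _ = ω (χt xB) := this
  -- unfold the two sides
  set kB := elemInvF U t hUt xB with hkBdef
  set n := π kB with hndef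
  have hχtxB : χt xB = elemF V t hVt n := rfl
  have hωxB : ω xB = elemF V l hVl n := rfl
  have hYt_n : ((χt xB : P)) ∈ (n : L) := by rw [hχtxB]; exact elemF_mem_line V t hVt n
  have hYl_n : ((ω xB : P)) ∈ (n : L) := by rw [hωxB]; exact elemF_mem_line V l hVl n
  set n₁ := π (elemInvF U t hUt (χt xB)) with hn₁def
  set n₂ := π (elemInvF U l hUl (ω xB)) with hn₂def
  have hWp₂ : ((χl (ω xB) : P)) ∈ (n₂ : L) := elemF_mem_line V l hVl n₂
  have hWp₁ : ((χl (ω xB) : P)) ∈ (n₁ : L) := by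
    rw [hreq]; exact elemF_mem_line V l hVl n₁
  have hn₁₂ : (n₁ : L) = (n₂ : L) := by
    by_contra hne
    have : ((χl (ω xB) : P)) = V :=
      eq_pt_of_two_lines hne hWp₁ hWp₂ n₁.2 n₂.2
    exact hVl (this ▸ (χl (ω xB)).2)
  have hn₁₂' : elemInvF U t hUt (χt xB) = elemInvF U l hUl (ω xB) :=
    πinj (Subtype.ext hn₁₂)
  set j : L := (elemInvF U t hUt (χt xB) : L) with hjdef
  have hUj : U ∈ j := (elemInvF U t hUt (χt xB)).2
  have hYt_j : ((χt xB : P)) ∈ j := elemInvF_mem U t hUt (χt xB)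
  have hYl_j : ((ω xB : P)) ∈ j := by
    rw [hjdef, hn₁₂']
    exact elemInvF_mem U l hUl (ω xB)
  have hBkB : B ∈ (kB : L) := elemInvF_mem U t hUt xB
  by_cases hYtYl : ((χt xB : P)) = ((ω xB : P))
  · -- forces B = W₀
    have hYt_l : ((χt xB : P)) ∈ l := hYtYl ▸ (ω xB).2
    have hYtPt : ((χt xB : P)) = Pt :=
      eq_pt_of_two_lines hlt hYt_l (χt xB).2 hPl ht2
    have hPtn : Pt ∈ (n : L) := hYtPt ▸ hYt_n
    have hnm₀ : (n : L) = m₀ := eq_line_of_two_pts hVPt n.2 hPtn hVm₀ hPtm₀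
    have h1 : π kB = π ⟨k₀, hUk₀⟩ := by
      rw [hπk₀, ← hndef]
      exact Subtype.ext hnm₀
    have h2 : kB = ⟨k₀, hUk₀⟩ := πinj h1
    have hBk₀ : B ∈ k₀ := by
      have := hBkB
      rw [h2] at this
      exact this
    exact hBW₀ ((meetP_eq hk₀t hBk₀ hBt).symm)
  · -- forces B = X₁
    have hjn : j = (n : L) := eq_line_of_two_pts hYtYl hYt_j hYl_j hYt_n hYl_n
    have hUn : U ∈ (n : L) := hjn ▸ hUj
    have hnu : (n : L) = u := eq_line_of_two_pts hUV hUn n.2 hUu hVu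
    have h1 : π kB = π tU := by
      rw [hπtU, ← hndef]
      exact Subtype.ext hnu
    have h2 : kB = tU := πinj h1
    have hBtU : B ∈ (tU : L) := by
      have := hBkB
      rw [h2] at this
      exact this
    exact hBX₁ ((meetP_eq htUt hBtU hBt).symm)

end Core

/-- **Secant lemma.** Let `κ` be a conic, `Pt` a point on `κ`, and `t` the
tangent to `κ` at `Pt`.  If `l` is a line through `Pt` with `l ≠ t`, then `l`
passes through a second point `R` of `κ` with `R ≠ Pt`; thus `l` is a secant
of `κ`. -/
theorem secant_lemma
    [Configuration.ProjectivePlane P L]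
    (h6 : LinesHaveAtLeast P L 6) (hT : AxiomT P L)
    (κ : Set P) (hκ : IsConic P L κ)
    (Pt : P) (hPκ : Pt ∈ κ) (t : L) (ht : IsTangent P L κ t Pt)
    (l : L) (hPl : Pt ∈ l) (hlt : l ≠ t) :
    (∃ R : P, R ∈ κ ∧ R ≠ Pt ∧ R ∈ l) ∧ IsSecant P L κ l := by
  obtain ⟨U, V, π, hUV, hπ, hnp, hκeq⟩ := hκ
  subst hκeq
  obtain ⟨R, hRκ, hRPt, hRl⟩ := secant_core h6 hT hUV hπ hnp Pt hPκ t ht.2.1 ht.2.2 l hPl hlt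
  exact ⟨⟨R, hRκ, hRPt, hRl⟩, ⟨R, Pt, hRPt, hRκ, hPκ, hRl, hPl⟩⟩
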